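/- arXiv:0909.4370 — 2 statements merged into one kernel-verified Lean document; each statement's English description precedes it below -/
import Mathlib

section
/- In a tree T with N vertices, for any vertex v, the ratio of rumor centralities satisfies R(v,T)/R(v*,T) = ∏_{i ∈ P(v*,v)} T_i^{v*} / (N - T_i^{v*}), where P(v*,v) is the set of vertices on the unique path from v* to v, excluding v* but including v. -/
noncomputable section

/-- The support (list of vertices) of the unique path from `a` to `b` in a connected graph. -/
def pathSupport {V : Type*} [DecidableEq V] (G : SimpleGraph V) (hG : G.Connected)
    (a b : V) : List V :=
  ((hG.preconnected a b).some.toPath : G.Walk a b).support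

/-- `inSub G hG root u x` says that `x` belongs to the subtree rooted at `u`
when the tree `G` is rooted at `root`, i.e. `u` lies on the unique path from `root` to `x`. -/
def inSub {V : Type*} [DecidableEq V] (G : SimpleGraph V) (hG : G.IsTree) (root u x : V) :
    Prop :=
  u ∈ pathSupport G hG.isConnected root x

/-- `subSize G hG root u` is the number of vertices of the subtree rooted at `u`
with respect to the root `root` (the quantity `T_u^root`). -/
def subSize {V : Type*} [DecidableEq V] (G : SimpleGraph V) (hG : G.IsTree) (root u : V) : ℕ :=
  Nat.card {x : V // inSub G hG root u x}

/-- `permCountOn G S u` is the number of permitted permutations of the vertex set `S`: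
bijections `σ : Fin |S| ≃ S` starting at `u` such that every vertex appears after
some already-placed neighbor. -/
def permCountOn {V : Type*} (G : SimpleGraph V) (S : Set V) (u : V) : ℕ :=
  Nat.card {σ : Fin (Nat.card S) ≃ S //
    (∀ i : Fin (Nat.card S), (i : ℕ) = 0 → (σ i : V) = u) ∧
    ∀ k : Fin (Nat.card S), 0 < (k : ℕ) →
      ∃ j : Fin (Nat.card S), (j : ℕ) < (k : ℕ) ∧ G.Adj (σ j : V) (σ k : V)}

/-- The rumor centrality `R(w,T) = N! / ∏_x T_x^w`. -/
def rumorCent {V : Type*} [Fintype V] [DecidableEq V] (G : SimpleGraph V) (hG : G.IsTree)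
    (w : V) : ℚ :=
  (Nat.factorial (Fintype.card V) : ℚ) / ∏ x : V, (subSize G hG w x : ℚ)

namespace RumorAux

variable {V : Type*} [DecidableEq V] {G : SimpleGraph V} (hG : G.IsTree)

/-- The canonical path. -/
def W (a b : V) : G.Walk a b := ((hG.isConnected.preconnected a b).some.toPath : G.Walk a b)

lemma W_isPath (a b : V) : (W hG a b).IsPath :=
  ((hG.isConnected.preconnected a b).some.toPath).2

lemma support_W (a b : V) : (W hG a b).support = pathSupport G hG.isConnected a b := rfl

include hG in
lemma path_unique {a b : V} {p q : G.Walk a b} (hp : p.IsPath) (hq : q.IsPath) : p = q :=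
  ((SimpleGraph.IsTree.existsUnique_path hG a b).unique hp hq)

lemma support_eq {a b : V} {p : G.Walk a b} (hp : p.IsPath) :
    p.support = pathSupport G hG.isConnected a b := by
  rw [← support_W hG, path_unique hG hp (W_isPath hG a b)]

lemma inSub_iff {r u x : V} : inSub G hG r u x ↔ u ∈ (W hG r x).support := Iff.rfl

lemma inSub_self (r x : V) : inSub G hG r r x := (W hG r x).start_mem_support

lemma inSub_end (r u : V) : inSub G hG r u u := (W hG r u).end_mem_support

lemma inSub_root_iff (r u : V) : inSub G hG r u r ↔ u = r := by
  have h : (W hG r r) = SimpleGraph.Walk.nil :=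
    path_unique hG (W_isPath hG r r) (SimpleGraph.Walk.IsPath.nil)
  rw [inSub_iff, h]
  simp

end RumorAux

namespace RumorAux
open SimpleGraph Walk
set_option linter.unusedSectionVars false

variable {V : Type*} [DecidableEq V] {G : SimpleGraph V} (hG : G.IsTree)

/-- Path between adjacent vertices is the single edge. -/
lemma W_adj {a b : V} (hab : G.Adj a b) :
    W hG a b = SimpleGraph.Walk.cons hab SimpleGraph.Walk.nil :=
  path_unique hG (W_isPath hG a b) (by simp [SimpleGraph.Walk.isPath_def, hab.ne])

lemma step {a b x y : V} (hab : G.Adj a b) (hxa : x ≠ a) (hxb : x ≠ b)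
    (h : inSub G hG a x y) : inSub G hG b x y := by
  rw [inSub_iff] at h ⊢
  by_cases hb : b ∈ (W hG a y).support
  · -- path b→y is the dropUntil
    have hd : ((W hG a y).dropUntil b hb).IsPath := (W_isPath hG a y).dropUntil hb
    have : W hG b y = (W hG a y).dropUntil b hb := path_unique hG (W_isPath hG b y) hd
    rw [this]
    -- x in support of W a y; decompose
    rw [← SimpleGraph.Walk.take_spec (W hG a y) hb,
      SimpleGraph.Walk.mem_support_append_iff] at h
    rcases h with h | h
    · exfalso
      have ht : ((W hG a y).takeUntil b hb).IsPath := (W_isPath hG a y).takeUntil hb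
      have : (W hG a y).takeUntil b hb = SimpleGraph.Walk.cons hab SimpleGraph.Walk.nil :=
        path_unique hG ht (by simp [SimpleGraph.Walk.isPath_def, hab.ne])
      rw [this] at h
      simp at h
      rcases h with h | h
      · exact hxa h
      · exact hxb h
    · exact h
  · have hc : (SimpleGraph.Walk.cons hab.symm (W hG a y)).IsPath :=
      ((W_isPath hG a y).cons hb)
    have : W hG b y = SimpleGraph.Walk.cons hab.symm (W hG a y) :=
      path_unique hG (W_isPath hG b y) hc
    rw [this]
    simp [h]

lemma inSub_compl {a b y : V} (hab : G.Adj a b) :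
    inSub G hG a b y ↔ ¬ inSub G hG b a y := by
  constructor
  · intro h hcontra
    rw [inSub_iff] at h hcontra
    -- a in path b→y; path b→y = dropUntil of path a→y at b
    have hd : ((W hG a y).dropUntil b h).IsPath := (W_isPath hG a y).dropUntil h
    have he : W hG b y = (W hG a y).dropUntil b h := path_unique hG (W_isPath hG b y) hd
    rw [he] at hcontra
    -- a appears in both take and drop parts, contradicting nodup
    have hnd := (W_isPath hG a y).2
    rw [← SimpleGraph.Walk.take_spec (W hG a y) h,
      SimpleGraph.Walk.support_append, List.nodup_append] at hnd
    have hta : a ∈ ((W hG a y).takeUntil b h).support :=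
      SimpleGraph.Walk.start_mem_support _
    have haa : a ∈ ((W hG a y).dropUntil b h).support.tail := by
      have hsc := SimpleGraph.Walk.support_eq_cons ((W hG a y).dropUntil b h)
      rw [hsc, List.mem_cons] at hcontra
      rcases hcontra with h' | h'
      · exact absurd h' hab.ne
      · exact h'
    exact hnd.2.2 a hta a haa rfl
  · intro h
    rw [inSub_iff] at h ⊢
    have hc : (SimpleGraph.Walk.cons hab (W hG b y)).IsPath := ((W_isPath hG b y).cons h)
    have : W hG a y = SimpleGraph.Walk.cons hab (W hG b y) :=
      path_unique hG (W_isPath hG a y) hc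
    rw [this]
    simp

end RumorAux

namespace RumorAux
set_option linter.unusedSectionVars false

variable {V : Type*} [DecidableEq V] {G : SimpleGraph V} (hG : G.IsTree)

instance instDecInSub (r u : V) : DecidablePred (inSub G hG r u) := fun _ =>
  inferInstanceAs (Decidable (u ∈ _))

variable [Fintype V]

lemma subSize_eq_card (r u : V) :
    subSize G hG r u = Fintype.card {x : V // inSub G hG r u x} :=
  Nat.card_eq_fintype_card

lemma subSize_self (r : V) : subSize G hG r r = Fintype.card V := by
  rw [subSize_eq_card]
  rw [Fintype.card_eq]
  exact ⟨Equiv.subtypeUnivEquiv (fun x => inSub_self hG r x)⟩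

lemma subSize_pos (r u : V) : 0 < subSize G hG r u :=
  haveI : Nonempty {x : V // inSub G hG r u x} := ⟨⟨u, inSub_end hG r u⟩⟩
  Nat.card_pos

lemma subSize_lt (r u : V) (h : u ≠ r) : subSize G hG r u < Fintype.card V := by
  rw [subSize_eq_card]
  exact Fintype.card_subtype_lt (x := r) (by rw [inSub_root_iff]; exact h)

lemma subSize_add_compl {a b : V} (hab : G.Adj a b) :
    subSize G hG a b + subSize G hG b a = Fintype.card V := by
  rw [subSize_eq_card, subSize_eq_card]
  have h1 : Fintype.card {x : V // inSub G hG a b x}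
      = Fintype.card {x : V // ¬ inSub G hG b a x} :=
    Fintype.card_congr (Equiv.subtypeEquivRight (fun y => inSub_compl hG hab))
  rw [h1, Fintype.card_subtype_compl]
  have := Fintype.card_subtype_le (inSub G hG b a)
  omega

lemma subSize_step {a b x : V} (hab : G.Adj a b) (hxa : x ≠ a) (hxb : x ≠ b) :
    subSize G hG a x = subSize G hG b x :=
  Nat.card_congr (Equiv.subtypeEquivRight (fun y =>
    ⟨step hG hab hxa hxb, step hG hab.symm hxb hxa⟩))

end RumorAux

namespace RumorAux
set_option linter.unusedSectionVars false

variable {V : Type*} [Fintype V] [DecidableEq V] {G : SimpleGraph V} (hG : G.IsTree)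

lemma prod_pos (w : V) : (0:ℚ) < ∏ x : V, (subSize G hG w x : ℚ) :=
  Finset.prod_pos (fun x _ => by exact_mod_cast subSize_pos hG w x)

lemma rumorCent_pos (w : V) : 0 < rumorCent G hG w := by
  rw [rumorCent]
  apply div_pos _ (prod_pos hG w)
  exact_mod_cast Nat.factorial_pos _

lemma rumorCent_div (a b : V) :
    rumorCent G hG b / rumorCent G hG a
      = (∏ x : V, (subSize G hG a x : ℚ)) / (∏ x : V, (subSize G hG b x : ℚ)) := by
  have ha := (prod_pos hG a).ne'
  have hb := (prod_pos hG b).ne'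
  have hf : (Nat.factorial (Fintype.card V) : ℚ) ≠ 0 := by
    exact_mod_cast (Nat.factorial_pos _).ne'
  rw [rumorCent, rumorCent]
  field_simp

lemma NS {a b : V} (hab : G.Adj a b) :
    rumorCent G hG b / rumorCent G hG a
      = (subSize G hG a b : ℚ)
        / ((Fintype.card V : ℚ) - (subSize G hG a b : ℚ)) := by
  classical
  rw [rumorCent_div hG a b]
  have hmemb : b ∈ Finset.univ.erase a := by
    simp [hab.ne']
  have hmema : a ∈ Finset.univ.erase b := by
    simp [hab.ne]
  rw [← Finset.mul_prod_erase Finset.univ _ (Finset.mem_univ a),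
      ← Finset.mul_prod_erase _ _ hmemb,
      ← Finset.mul_prod_erase Finset.univ (fun x => (subSize G hG b x : ℚ)) (Finset.mem_univ b),
      ← Finset.mul_prod_erase _ _ hmema]
  rw [Finset.erase_right_comm (a := b) (b := a)]
  have hC : ∏ x ∈ (Finset.univ.erase a).erase b, (subSize G hG b x : ℚ)
      = ∏ x ∈ (Finset.univ.erase a).erase b, (subSize G hG a x : ℚ) := by
    apply Finset.prod_congr rfl
    intro x hx
    have hxb : x ≠ b := Finset.ne_of_mem_erase hx
    have hxa : x ≠ a := Finset.ne_of_mem_erase (Finset.mem_of_mem_erase hx)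
    rw [subSize_step hG hab hxa hxb]
  rw [hC]
  have hSa : subSize G hG a a = Fintype.card V := subSize_self hG a
  have hSb : subSize G hG b b = Fintype.card V := subSize_self hG b
  have hcompl : subSize G hG a b + subSize G hG b a = Fintype.card V :=
    subSize_add_compl hG hab
  have hba : (subSize G hG b a : ℚ)
      = (Fintype.card V : ℚ) - (subSize G hG a b : ℚ) := by
    have := hcompl
    push_cast [← this]
    ring
  rw [hSa, hSb, hba]
  have hC0 : (∏ x ∈ (Finset.univ.erase a).erase b, (subSize G hG a x : ℚ)) ≠ 0 := by
    apply Finset.prod_ne_zero_iff.2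
    intro x _
    exact_mod_cast (subSize_pos hG a x).ne'
  have hN0 : (Fintype.card V : ℚ) ≠ 0 := by
    have : 0 < Fintype.card V := Fintype.card_pos_iff.2 ⟨a⟩
    exact_mod_cast this.ne'
  have hNS0 : (Fintype.card V : ℚ) - (subSize G hG a b : ℚ) ≠ 0 := by
    have : subSize G hG a b < Fintype.card V := subSize_lt hG a b hab.ne'
    have : (subSize G hG a b : ℚ) < (Fintype.card V : ℚ) := by exact_mod_cast this
    linarith
  field_simp

end RumorAux

namespace RumorAux
set_option linter.unusedSectionVars false

variable {V : Type*} [Fintype V] [DecidableEq V] {G : SimpleGraph V} (hG : G.IsTree)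

lemma main_aux {a b : V} (w : G.Walk a b) (hp : w.IsPath) :
    rumorCent G hG b / rumorCent G hG a =
      ∏ i ∈ w.support.toFinset.erase a,
        (subSize G hG a i : ℚ) / ((Fintype.card V : ℚ) - (subSize G hG a i : ℚ)) := by
  classical
  induction w with
  | nil =>
    simp [div_self (rumorCent_pos hG _).ne']
  | @cons a c b h w' ih =>
    rw [SimpleGraph.Walk.cons_isPath_iff] at hp
    obtain ⟨hp', hna⟩ := hp
    have hRc := (rumorCent_pos hG c).ne'
    have hRa := (rumorCent_pos hG a).ne'
    have hRb := (rumorCent_pos hG b).ne'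
    have key : rumorCent G hG b / rumorCent G hG a
        = (rumorCent G hG b / rumorCent G hG c) * (rumorCent G hG c / rumorCent G hG a) := by
      field_simp
    rw [key, ih hp', NS hG h]
    -- manipulate the RHS index set
    have hsupp : (SimpleGraph.Walk.cons h w').support = a :: w'.support := by
      simp
    rw [hsupp]
    have hnafin : a ∉ w'.support.toFinset := by
      simpa using hna
    rw [List.toFinset_cons, Finset.erase_insert hnafin]
    have hcfin : c ∈ w'.support.toFinset := by
      simp [SimpleGraph.Walk.start_mem_support]
    rw [← Finset.mul_prod_erase _ _ hcfin]
    have hprod : ∏ i ∈ w'.support.toFinset.erase c,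
        (subSize G hG a i : ℚ) / ((Fintype.card V : ℚ) - (subSize G hG a i : ℚ))
        = ∏ i ∈ w'.support.toFinset.erase c,
        (subSize G hG c i : ℚ) / ((Fintype.card V : ℚ) - (subSize G hG c i : ℚ)) := by
      apply Finset.prod_congr rfl
      intro i hi
      have hic : i ≠ c := Finset.ne_of_mem_erase hi
      have hia : i ≠ a := by
        intro hcontra
        apply hna
        have : i ∈ w'.support.toFinset := Finset.mem_of_mem_erase hi
        rw [← hcontra]
        simpa using this
      rw [subSize_step hG h hia hic]
    rw [hprod, mul_comm]

end RumorAux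


/-- `R(v,T)/R(v*,T) = ∏_{i ∈ P(v*,v)} T_i^{v*}/(N - T_i^{v*})`, where `P(v*,v)` is the
set of vertices on the unique path from `v*` to `v`, excluding `v*` (but including `v`). -/
theorem rumorCent_path_ratio {V : Type*} [Fintype V] [DecidableEq V]
    (G : SimpleGraph V) (hG : G.IsTree) (vstar v : V) :
    rumorCent G hG v / rumorCent G hG vstar =
      ∏ i ∈ (pathSupport G hG.isConnected vstar v).toFinset.erase vstar,
        (subSize G hG vstar i : ℚ) /
          ((Fintype.card V : ℚ) - (subSize G hG vstar i : ℚ)) := by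
  have h := RumorAux.main_aux hG (RumorAux.W hG vstar v) (RumorAux.W_isPath hG vstar v)
  rwa [RumorAux.support_W] at h
end
end

section
/- Let T be a tree on N vertices, let v* be a vertex of degree d with neighboring subtrees of sizes N_1,...,N_d (so Σ N_j = N-1). If max_j N_j < (1/2)·Σ_j N_j, then v* is the unique rumor center of T. -/
noncomputable section

section TreeHelpers

open SimpleGraph Walk Finset

variable {V : Type*} [DecidableEq V] {G : SimpleGraph V} (hG : G.IsTree)
include hG

/-- The unique path in a tree, as a walk. -/
def tpath (a x : V) : G.Walk a x :=
  ((hG.isConnected.preconnected a x).some.toPath : G.Walk a x)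

lemma tpath_isPath (a x : V) : (tpath hG a x).IsPath :=
  ((hG.isConnected.preconnected a x).some.toPath).2

lemma eq_tpath {a x : V} (p : G.Walk a x) (hp : p.IsPath) : p = tpath hG a x :=
  congrArg Subtype.val (hG.IsAcyclic.path_unique ⟨p, hp⟩ _)

lemma inSub_iff (a u x : V) : inSub G hG a u x ↔ u ∈ (tpath hG a x).support := Iff.rfl

/-- If `u ∉ path(v,x)` then the path from `u` is the edge `u v` followed by the path from `v`. -/
lemma tpath_eq_cons {u v x : V} (hadj : G.Adj u v) (h : u ∉ (tpath hG v x).support) :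
    tpath hG u x = Walk.cons hadj (tpath hG v x) :=
  (eq_tpath hG _ ((tpath_isPath hG v x).cons h)).symm

lemma mem_of_notMem {u v x : V} (hadj : G.Adj u v) (h : u ∉ (tpath hG v x).support) :
    v ∈ (tpath hG u x).support := by
  rw [tpath_eq_cons hG hadj h, Walk.support_cons]
  exact List.mem_cons_of_mem _ (Walk.start_mem_support _)

/-- `u` and `v` adjacent: not both `u ∈ path(v,x)` and `v ∈ path(u,x)`. -/
lemma not_both_mem {u v x : V} (hadj : G.Adj u v)
    (h1 : u ∈ (tpath hG v x).support) (h2 : v ∈ (tpath hG u x).support) : False := by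
  set p := tpath hG v x with hp
  have hpp : p.IsPath := tpath_isPath hG v x
  have hq : (p.dropUntil u h1).IsPath := hpp.dropUntil h1
  have hqe : tpath hG u x = p.dropUntil u h1 := (eq_tpath hG _ hq).symm
  rw [hqe] at h2
  have hsplit : p.support = (p.takeUntil u h1).support ++ (p.dropUntil u h1).support.tail := by
    conv_lhs => rw [← Walk.take_spec p h1]
    rw [Walk.support_append]
  have hnd := hpp.support_nodup
  rw [hsplit] at hnd
  have hvtail : v ∈ (p.dropUntil u h1).support.tail := by
    have := Walk.support_eq_cons (p.dropUntil u h1)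
    rw [this] at h2
    rcases List.mem_cons.mp h2 with h | h
    · exact absurd h hadj.ne'
    · exact h
  exact (List.disjoint_of_nodup_append hnd) (Walk.start_mem_support _) hvtail

lemma mem_iff_notMem {u v x : V} (hadj : G.Adj u v) :
    v ∈ (tpath hG u x).support ↔ u ∉ (tpath hG v x).support := by
  constructor
  · intro h2 h1; exact not_both_mem hG hadj h1 h2
  · exact mem_of_notMem hG hadj

/-- In a path starting at `a`, any vertex adjacent to `a` on the path is the second vertex. -/
lemma eq_cons_dropUntil {a x b : V} (p : G.Walk a x) (hp : p.IsPath)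
    (hb : b ∈ p.support) (hab : G.Adj a b) :
    p = Walk.cons hab (p.dropUntil b hb) := by
  have ht : p.takeUntil b hb = Walk.cons hab Walk.nil := by
    have h1 : (p.takeUntil b hb).IsPath := hp.takeUntil hb
    have h2 : (Walk.cons hab (Walk.nil : G.Walk b b)).IsPath := by
      simp [Walk.cons_isPath_iff, hab.ne]
    rw [eq_tpath hG _ h1, eq_tpath hG _ h2]
  conv_lhs => rw [← Walk.take_spec p hb]
  rw [ht]
  simp

lemma adj_mem_unique {a x b b' : V} (p : G.Walk a x) (hp : p.IsPath)
    (hb : b ∈ p.support) (hab : G.Adj a b) (hb' : b' ∈ p.support) (hab' : G.Adj a b') :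
    b = b' := by
  have key : ∀ c : V, (hc : c ∈ p.support) → G.Adj a c → p.support.tail.head? = some c := by
    intro c hc hac
    conv_lhs => rw [eq_cons_dropUntil hG p hp hc hac]
    rw [Walk.support_cons, List.tail_cons, Walk.support_eq_cons]
    rfl
  have e1 := key b hb hab
  have e2 := key b' hb' hab'
  rw [e1] at e2
  exact Option.some_injective _ e2

/-- Step lemma: going one more step away from the root shrinks the subtree. -/
lemma step_mem {u'' u w x : V} (h1 : G.Adj u'' u) (h2 : G.Adj u w) (hne : u'' ≠ w)
    (hw : w ∈ (tpath hG u x).support) : u ∈ (tpath hG u'' x).support := by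
  by_contra hu
  have hcons := tpath_eq_cons hG h1.symm hu
  have hu'' : u'' ∈ (tpath hG u x).support := by
    rw [hcons, Walk.support_cons]
    exact List.mem_cons_of_mem _ (Walk.start_mem_support _)
  exact hne (adj_mem_unique hG (tpath hG u x) (tpath_isPath hG u x) hu'' h1.symm hw h2)

/-- Off-edge invariance: for adjacent roots `u v` and `m ∉ {u,v}`,
membership of `m` in the two paths agrees. -/
lemma mem_tpath_invariant {u v m x : V} (hadj : G.Adj u v) (hmu : m ≠ u) (hmv : m ≠ v) :
    m ∈ (tpath hG u x).support ↔ m ∈ (tpath hG v x).support := by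
  have key : ∀ a b : V, G.Adj a b → m ≠ a → m ≠ b → m ∈ (tpath hG b x).support →
      m ∈ (tpath hG a x).support := by
    intro a b hab hma hmb hm
    by_cases ha : a ∈ (tpath hG b x).support
    · have hrep := eq_cons_dropUntil hG (tpath hG b x) (tpath_isPath hG b x) ha hab.symm
      have hdrop : ((tpath hG b x).dropUntil a ha) = tpath hG a x :=
        eq_tpath hG _ ((tpath_isPath hG b x).dropUntil ha)
      rw [hrep, Walk.support_cons] at hm
      rcases List.mem_cons.mp hm with h | h
      · exact absurd h hmb
      · rw [← hdrop]; exact h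
    · rw [tpath_eq_cons hG hab ha, Walk.support_cons]
      exact List.mem_cons_of_mem _ hm
  constructor
  · exact key v u hadj.symm hmv hmu
  · exact key u v hadj hmu hmv

variable [Fintype V]

lemma subSize_eq (a u : V) :
    subSize G hG a u = (univ.filter (fun x => u ∈ (tpath hG a x).support)).card := by
  have h : subSize G hG a u = Nat.card {x : V // u ∈ (tpath hG a x).support} := rfl
  rw [h, Nat.card_eq_fintype_card, Fintype.card_subtype]

lemma subSize_pos (a u : V) : 0 < subSize G hG a u := by
  rw [subSize_eq]
  exact Finset.card_pos.mpr ⟨u, Finset.mem_filter.mpr ⟨mem_univ u, Walk.end_mem_support _⟩⟩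

lemma subSize_root (a : V) : subSize G hG a a = Fintype.card V := by
  rw [subSize_eq, Finset.filter_true_of_mem (fun x _ => Walk.start_mem_support _), Finset.card_univ]

lemma subSize_add {u v : V} (hadj : G.Adj u v) :
    subSize G hG u v + subSize G hG v u = Fintype.card V := by
  rw [subSize_eq, subSize_eq, ← Finset.card_univ (α := V),
    ← Finset.card_filter_add_card_filter_not
      (s := univ) (p := fun x => v ∈ (tpath hG u x).support)]
  congr 1
  apply congrArg Finset.card
  apply Finset.filter_congr
  intro x _
  constructor
  · intro h1 h2; exact not_both_mem hG hadj h1 h2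
  · intro h; by_contra h2
    exact h (mem_of_notMem hG hadj h2)

lemma subSize_invariant {u v m : V} (hadj : G.Adj u v) (hmu : m ≠ u) (hmv : m ≠ v) :
    subSize G hG u m = subSize G hG v m := by
  rw [subSize_eq, subSize_eq]
  congr 1
  apply Finset.filter_congr
  intro x _
  exact mem_tpath_invariant hG hadj hmu hmv

lemma subSize_step {u'' u w : V} (h1 : G.Adj u'' u) (h2 : G.Adj u w) (hne : u'' ≠ w) :
    subSize G hG u w ≤ subSize G hG u'' u := by
  rw [subSize_eq, subSize_eq]
  apply Finset.card_le_card
  intro x hx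
  rw [Finset.mem_filter] at hx ⊢
  exact ⟨mem_univ x, step_mem hG h1 h2 hne hx.2⟩

lemma sum_neighbors_lt [DecidableRel G.Adj] (vstar : V) :
    ∑ b ∈ G.neighborFinset vstar, subSize G hG vstar b < Fintype.card V := by
  have hdisj : ∀ b ∈ G.neighborFinset vstar, ∀ b' ∈ G.neighborFinset vstar, b ≠ b' →
      Disjoint (univ.filter (fun x => b ∈ (tpath hG vstar x).support))
        (univ.filter (fun x => b' ∈ (tpath hG vstar x).support)) := by
    intro b hb b' hb' hne
    rw [Finset.disjoint_left]
    intro x hx hx'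
    rw [Finset.mem_filter] at hx hx'
    exact hne (adj_mem_unique hG (tpath hG vstar x) (tpath_isPath hG vstar x) hx.2
      ((SimpleGraph.mem_neighborFinset _ _ _).mp hb) hx'.2
      ((SimpleGraph.mem_neighborFinset _ _ _).mp hb'))
  calc ∑ b ∈ G.neighborFinset vstar, subSize G hG vstar b
      = ∑ b ∈ G.neighborFinset vstar,
          (univ.filter (fun x => b ∈ (tpath hG vstar x).support)).card := by
        exact Finset.sum_congr rfl fun b _ => subSize_eq hG vstar b
    _ = ((G.neighborFinset vstar).biUnion
          (fun b => univ.filter (fun x => b ∈ (tpath hG vstar x).support))).card :=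
        (Finset.card_biUnion hdisj).symm
    _ ≤ (univ.erase vstar).card := by
        apply Finset.card_le_card
        intro x hx
        rw [Finset.mem_biUnion] at hx
        obtain ⟨b, hb, hxb⟩ := hx
        rw [Finset.mem_filter] at hxb
        rw [Finset.mem_erase]
        refine ⟨?_, mem_univ x⟩
        intro hxeq
        rw [hxeq] at hxb
        have hnil : (Walk.nil : G.Walk vstar vstar) = tpath hG vstar vstar :=
          eq_tpath hG _ Walk.IsPath.nil
        have := hxb.2
        rw [← hnil, Walk.support_nil, List.mem_singleton] at this
        exact ((SimpleGraph.mem_neighborFinset _ _ _).mp hb).ne' this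
    _ < Fintype.card V := by
        rw [Finset.card_erase_of_mem (mem_univ vstar), Finset.card_univ]
        have : 0 < Fintype.card V := Fintype.card_pos_iff.mpr ⟨vstar⟩
        omega

lemma prod_lt {u w : V} (hadj : G.Adj u w)
    (ht : 2 * subSize G hG u w < Fintype.card V) :
    ∏ x : V, subSize G hG u x < ∏ x : V, subSize G hG w x := by
  have hne : u ≠ w := hadj.ne
  have hwmem : w ∈ univ.erase u := Finset.mem_erase.mpr ⟨hne.symm, mem_univ w⟩
  have humem : u ∈ univ.erase w := Finset.mem_erase.mpr ⟨hne, mem_univ u⟩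
  have hL : ∏ x : V, subSize G hG u x =
      subSize G hG u u * (subSize G hG u w * ∏ x ∈ (univ.erase u).erase w, subSize G hG u x) := by
    rw [Finset.mul_prod_erase _ _ hwmem, Finset.mul_prod_erase _ _ (mem_univ u)]
  have hR : ∏ x : V, subSize G hG w x =
      subSize G hG w w * (subSize G hG w u * ∏ x ∈ (univ.erase w).erase u, subSize G hG w x) := by
    rw [Finset.mul_prod_erase _ _ humem, Finset.mul_prod_erase _ _ (mem_univ w)]
  have herase : (univ.erase w).erase u = (univ.erase u).erase w := Finset.erase_right_comm
  have hrest : ∏ x ∈ (univ.erase u).erase w, subSize G hG u x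
      = ∏ x ∈ (univ.erase u).erase w, subSize G hG w x := by
    apply Finset.prod_congr rfl
    intro x hx
    rw [Finset.mem_erase, Finset.mem_erase] at hx
    exact subSize_invariant hG hadj (m := x) hx.2.1 hx.1
  rw [hL, hR, herase, ← hrest, subSize_root, subSize_root]
  have hsum := subSize_add hG hadj
  have hR0 : 0 < ∏ x ∈ (univ.erase u).erase w, subSize G hG u x :=
    Finset.prod_pos (fun x _ => subSize_pos hG u x)
  have hN : 0 < Fintype.card V := Fintype.card_pos_iff.mpr ⟨u⟩
  have htlt : subSize G hG u w < subSize G hG w u := by omega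
  exact mul_lt_mul_of_pos_left (mul_lt_mul_of_pos_right htlt hR0) hN


lemma main_ind [DecidableRel G.Adj] (vstar : V)
    (hbal' : ∀ b ∈ G.neighborFinset vstar, 2 * subSize G hG vstar b < Fintype.card V) :
    ∀ {u r : V} (q : G.Walk u r), r = vstar → ∀ {w : V} (h : G.Adj w u), (Walk.cons h q).IsPath →
      2 * subSize G hG u w < Fintype.card V ∧
        ∏ x : V, subSize G hG vstar x < ∏ x : V, subSize G hG w x := by
  intro u r q
  induction q with
  | nil =>
    rintro rfl
    intro w h _
    have hb := (SimpleGraph.mem_neighborFinset _ _ _).mpr h.symm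
    exact ⟨hbal' w hb, prod_lt hG h.symm (hbal' w hb)⟩
  | @cons u b _ h' q'' ih =>
    rintro rfl
    intro w h hp
    have hp' : (Walk.cons h' q'').IsPath := hp.of_cons
    obtain ⟨ih1, ih2⟩ := ih rfl h' hp'
    have hbw : b ≠ w := by
      have h2 := (Walk.cons_isPath_iff _ _).mp hp |>.2
      intro hbw
      apply h2
      rw [← hbw]
      rw [Walk.support_cons]
      exact List.mem_cons_of_mem _ (Walk.start_mem_support _)
    have hstep : subSize G hG u w ≤ subSize G hG b u := subSize_step hG h'.symm h.symm hbw
    have ht : 2 * subSize G hG u w < Fintype.card V := by omega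
    exact ⟨ht, ih2.trans (prod_lt hG h.symm ht)⟩

end TreeHelpers

/-- If each of the `d` neighboring subtrees of a vertex `v*` of degree `d` has size
strictly less than half of the total size `∑_j N_j = N - 1` of all of them, then
`v*` is the unique rumor center. -/
theorem balanced_subtrees_unique_rumor_center {V : Type*} [Fintype V] [DecidableEq V]
    (G : SimpleGraph V) [DecidableRel G.Adj] (hG : G.IsTree) (vstar : V) (d : ℕ)
    (hdeg : G.degree vstar = d)
    (hbal : ∀ u ∈ G.neighborFinset vstar,
      (subSize G hG vstar u : ℚ) <
        (∑ w ∈ G.neighborFinset vstar, (subSize G hG vstar w : ℚ)) / 2) :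
    ∀ w : V, w ≠ vstar → rumorCent G hG w < rumorCent G hG vstar := by
  intro w hw
  have hbal' : ∀ b ∈ G.neighborFinset vstar, 2 * subSize G hG vstar b < Fintype.card V := by
    intro b hb
    have h1 := hbal b hb
    rw [lt_div_iff₀ (by norm_num : (0:ℚ) < 2)] at h1
    have h2 : ((subSize G hG vstar b : ℚ)) * 2 < (Fintype.card V : ℚ) := by
      refine h1.trans_le ?_
      have hs := (sum_neighbors_lt hG vstar).le
      calc (∑ y ∈ G.neighborFinset vstar, ((subSize G hG vstar y : ℕ) : ℚ))
          = ((∑ y ∈ G.neighborFinset vstar, subSize G hG vstar y : ℕ) : ℚ) := by push_cast; rfl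
        _ ≤ ((Fintype.card V : ℕ) : ℚ) := by exact_mod_cast hs
    have h3 : subSize G hG vstar b * 2 < Fintype.card V := by exact_mod_cast h2
    omega
  have hp : (((hG.isConnected.preconnected w vstar).some.toPath : G.Walk w vstar)).IsPath :=
    ((hG.isConnected.preconnected w vstar).some.toPath).2
  revert hp
  generalize (((hG.isConnected.preconnected w vstar).some.toPath : G.Walk w vstar)) = p
  intro hp
  cases p with
  | nil => exact absurd rfl hw
  | cons h q =>
    have hmain := main_ind hG vstar hbal' q rfl h hp
    have hlt : ∏ x : V, subSize G hG vstar x < ∏ x : V, subSize G hG w x := hmain.2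
    rw [rumorCent, rumorCent]
    apply div_lt_div_of_pos_left
    · exact_mod_cast Nat.factorial_pos _
    · exact Finset.prod_pos fun x _ => by exact_mod_cast subSize_pos hG vstar x
    · rw [← Nat.cast_prod, ← Nat.cast_prod]
      exact_mod_cast hlt
end
end
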